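/- Let F : 𝔻 → 𝔻 be holomorphic with F(0) = 0 and F′(0) = α ∈ (0, 1]. Then F is injective on the open disc of radius r₀ = α/(1 + √(1 − α²)) centered at 0. -/

import Mathlib

open Metric Set

local notation "conj'" => starRingEnd ℂ

private noncomputable def mob (c w : ℂ) : ℂ := (w - c) / (1 - conj' c * w)

private lemma mob_den_ne {c w : ℂ} (hc : ‖c‖ < 1) (hw : ‖w‖ < 1) :
    (1 : ℂ) - conj' c * w ≠ 0 := by
  have h1 : ‖conj' c * w‖ < 1 := by
    rw [norm_mul]
    have hc' : ‖conj' c‖ = ‖c‖ := by simp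
    rw [hc']
    nlinarith [norm_nonneg c, norm_nonneg w]
  intro h
  rw [sub_eq_zero] at h
  rw [← h] at h1
  simp at h1

private lemma mob_normSq (c w : ℂ) :
    Complex.normSq (1 - conj' c * w) - Complex.normSq (w - c)
      = (1 - Complex.normSq c) * (1 - Complex.normSq w) := by
  simp only [Complex.normSq_apply, Complex.sub_re, Complex.sub_im, Complex.mul_re,
    Complex.mul_im, Complex.one_re, Complex.one_im, Complex.conj_re, Complex.conj_im]
  ring

private lemma mob_mem {c w : ℂ} (hc : ‖c‖ < 1) (hw : ‖w‖ < 1) : ‖mob c w‖ < 1 := by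
  have hden := mob_den_ne hc hw
  rw [mob, norm_div, div_lt_one (norm_pos_iff.mpr hden)]
  have hc2 : Complex.normSq c < 1 := by
    rw [Complex.normSq_eq_norm_sq]
    nlinarith [norm_nonneg c]
  have hw2 : Complex.normSq w < 1 := by
    rw [Complex.normSq_eq_norm_sq]
    nlinarith [norm_nonneg w]
  have h2 : Complex.normSq (w - c) < Complex.normSq (1 - conj' c * w) := by
    nlinarith [mob_normSq c w]
  have := Real.sqrt_lt_sqrt (Complex.normSq_nonneg _) h2
  simpa [Complex.norm_def] using this

private lemma mob_hasDerivAt (c : ℂ) {w : ℂ} (h : (1 : ℂ) - conj' c * w ≠ 0) :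
    HasDerivAt (mob c) ((1 - conj' c * c) / (1 - conj' c * w) ^ 2) w := by
  have h1 : HasDerivAt (fun z : ℂ => z - c) 1 w := (hasDerivAt_id w).sub_const c
  have h2 : HasDerivAt (fun z : ℂ => 1 - conj' c * z) (-(conj' c)) w := by
    simpa using ((hasDerivAt_id w).const_mul (conj' c)).const_sub 1
  have h3 := h1.div h2 h
  have heq : (1 - conj' c * c) / (1 - conj' c * w) ^ 2
      = (1 * (1 - conj' c * w) - (w - c) * -(conj' c)) / (1 - conj' c * w) ^ 2 := by
    congr 1
    ring
  rw [heq]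
  exact h3

private lemma norm_one_sub_conj_mul_self (c : ℂ) (hc : ‖c‖ < 1) :
    ‖(1 : ℂ) - conj' c * c‖ = 1 - ‖c‖ ^ 2 := by
  have h1 : (1 : ℂ) - conj' c * c = (((1 - ‖c‖ ^ 2 : ℝ)) : ℂ) := by
    rw [← Complex.normSq_eq_conj_mul_self]
    push_cast
    rw [Complex.normSq_eq_norm_sq]
    push_cast
    ring
  rw [h1, Complex.norm_real, Real.norm_eq_abs, abs_of_nonneg (by nlinarith [norm_nonneg c])]

private lemma schwarz_pick {g : ℂ → ℂ} (hg : DifferentiableOn ℂ g (ball 0 1))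
    (hm : MapsTo g (ball 0 1) (ball 0 1)) {z₀ : ℂ} (hz₀ : z₀ ∈ ball 0 1) :
    ‖deriv g z₀‖ * (1 - ‖z₀‖ ^ 2) ≤ 1 - ‖g z₀‖ ^ 2 := by
  have hz1 : ‖z₀‖ < 1 := mem_ball_zero_iff.mp hz₀
  have hc1 : ‖g z₀‖ < 1 := mem_ball_zero_iff.mp (hm hz₀)
  set c := g z₀ with hcdef
  have hnz : ‖-z₀‖ < 1 := by simpa using hz1
  have hφm : MapsTo (mob (-z₀)) (ball 0 1) (ball 0 1) := fun w hw =>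
    mem_ball_zero_iff.mpr (mob_mem hnz (mem_ball_zero_iff.mp hw))
  have hφd : DifferentiableOn ℂ (mob (-z₀)) (ball 0 1) := fun w hw =>
    (mob_hasDerivAt (-z₀)
      (mob_den_ne hnz (mem_ball_zero_iff.mp hw))).differentiableAt.differentiableWithinAt
  have hφ0 : mob (-z₀) 0 = z₀ := by simp [mob]
  have hgφd : DifferentiableOn ℂ (g ∘ mob (-z₀)) (ball 0 1) := hg.comp hφd hφm
  have hgφm : MapsTo (g ∘ mob (-z₀)) (ball 0 1) (ball 0 1) := hm.comp hφm
  set h : ℂ → ℂ := (mob c) ∘ (g ∘ mob (-z₀)) with hhdef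
  have hhd : DifferentiableOn ℂ h (ball 0 1) := by
    intro w hw
    have h1 := hgφd w hw
    have h2 := (mob_hasDerivAt c
      (mob_den_ne hc1 (mem_ball_zero_iff.mp (hgφm hw)))).differentiableAt
    exact h2.comp_differentiableWithinAt w h1
  have hhm : MapsTo h (ball 0 1) (ball 0 1) := fun w hw =>
    mem_ball_zero_iff.mpr (mob_mem hc1 (mem_ball_zero_iff.mp (hgφm hw)))
  have hh0 : h 0 = 0 := by
    simp [hhdef, Function.comp, hφ0, ← hcdef, mob]
  have hsch : ‖deriv h 0‖ ≤ 1 := by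
    have := Complex.norm_deriv_le_div_of_mapsTo_ball hhd (by rw [hh0]; exact hhm.mono_right ball_subset_closedBall) one_pos
    simpa using this
  have hφ' : HasDerivAt (mob (-z₀)) (1 - conj' z₀ * z₀) 0 := by
    have := mob_hasDerivAt (-z₀) (w := 0) (by simp)
    simpa using this
  have hg' : HasDerivAt g (deriv g z₀) (mob (-z₀) 0) := by
    rw [hφ0]
    exact (hg.differentiableAt (isOpen_ball.mem_nhds hz₀)).hasDerivAt
  have hgφ' : HasDerivAt (g ∘ mob (-z₀)) (deriv g z₀ * (1 - conj' z₀ * z₀)) 0 :=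
    HasDerivAt.comp 0 hg' hφ'
  have hσ' : HasDerivAt (mob c) ((1 - conj' c * c) / (1 - conj' c * c) ^ 2)
      ((g ∘ mob (-z₀)) 0) := by
    have hcc : (g ∘ mob (-z₀)) 0 = c := by simp [Function.comp, hφ0, hcdef]
    rw [hcc]
    exact mob_hasDerivAt c (mob_den_ne hc1 hc1)
  have hh' : HasDerivAt h ((1 - conj' c * c) / (1 - conj' c * c) ^ 2
      * (deriv g z₀ * (1 - conj' z₀ * z₀))) 0 := HasDerivAt.comp 0 hσ' hgφ'
  have hBne : (1 : ℂ) - conj' c * c ≠ 0 := mob_den_ne hc1 hc1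
  have hnB : ‖(1 : ℂ) - conj' c * c‖ = 1 - ‖c‖ ^ 2 := norm_one_sub_conj_mul_self c hc1
  have hnA : ‖(1 : ℂ) - conj' z₀ * z₀‖ = 1 - ‖z₀‖ ^ 2 := norm_one_sub_conj_mul_self z₀ hz1
  have hcpos : 0 < 1 - ‖c‖ ^ 2 := by nlinarith [norm_nonneg c]
  have hDval : ‖deriv h 0‖ = ‖deriv g z₀‖ * (1 - ‖z₀‖ ^ 2) / (1 - ‖c‖ ^ 2) := by
    rw [hh'.deriv, norm_mul, norm_div, norm_pow, hnB, norm_mul, hnA]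
    rw [show (1 - ‖c‖ ^ 2) / (1 - ‖c‖ ^ 2) ^ 2 = (1 - ‖c‖ ^ 2)⁻¹ by
      rw [pow_two (1 - ‖c‖ ^ 2), div_mul_eq_div_div, div_self hcpos.ne', one_div]]
    rw [div_eq_mul_inv]
    ring
  rw [hDval, div_le_one hcpos] at hsch
  exact hsch

set_option maxHeartbeats 1000000 in
private lemma landau_core {α t x y D q : ℝ} (hα0 : 0 < α) (hα1' : α < 1)
    (ht0 : 0 ≤ t) (ht1 : t < 1)
    (hq2 : q ^ 2 = 1 - α ^ 2) (hq0 : 0 ≤ q) (htq : t * (1 + q) < α)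
    (hcon2 : (x - α) ^ 2 + y ^ 2 ≤ t ^ 2 * ((1 - α * x) ^ 2 + (α * y) ^ 2))
    (hD0 : 0 ≤ D) (hpk : D * (1 - t ^ 2) ≤ 1 - (x ^ 2 + y ^ 2)) :
    0 < x - t * D := by
  have htα : t < α := by nlinarith [mul_nonneg ht0 hq0]
  have hαt1 : 0 < 1 - α * t := by nlinarith
  have hαt2 : 0 < 1 - α ^ 2 * t ^ 2 := by nlinarith
  have hα2 : 0 < 1 - α ^ 2 := by nlinarith
  have hE' : 0 ≤ (t ^ 2 * ((1 - α * x) ^ 2 + (α * y) ^ 2) - ((x - α) ^ 2 + y ^ 2))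
      * (1 - α ^ 2 * t ^ 2) := mul_nonneg (by linarith) hαt2.le
  have hR : 0 ≤ t * (1 - α ^ 2) := mul_nonneg ht0 hα2.le
  have hE : ((1 - α ^ 2 * t ^ 2) * x - α * (1 - t ^ 2)) ^ 2 + (1 - α ^ 2 * t ^ 2) ^ 2 * y ^ 2
      ≤ (t * (1 - α ^ 2)) ^ 2 := by nlinarith [hE']
  have hPR : -(t * (1 - α ^ 2)) ≤ (1 - α ^ 2 * t ^ 2) * x - α * (1 - t ^ 2) :=
    (abs_le_of_sq_le_sq' (by nlinarith [hE, mul_nonneg (sq_nonneg (1 - α ^ 2 * t ^ 2)) (sq_nonneg y)]) hR).1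
  have hαt3 : (0:ℝ) < 1 + α * t := by nlinarith [mul_nonneg hα0.le ht0]
  have hB : α - t ≤ x * (1 - α * t) := by nlinarith [hPR, hαt3]
  clear hPR hE hE' hcon2
  have h5 : (α - t) ^ 2 ≤ (x * (1 - α * t)) ^ 2 := by
    nlinarith [hB, sq_nonneg (x * (1 - α * t) - (α - t))]
  have hC : (1 - α * t) ^ 2 * (1 - x ^ 2 - y ^ 2) ≤ (1 - α ^ 2) * (1 - t ^ 2) := by
    nlinarith [h5, mul_nonneg (sq_nonneg (1 - α * t)) (sq_nonneg y)]
  clear h5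
  have h7 : (0:ℝ) < 1 - t ^ 2 := by nlinarith
  have hD2 : D * (1 - α * t) ^ 2 ≤ 1 - α ^ 2 := by
    have h8 : D * (1 - α * t) ^ 2 * (1 - t ^ 2) ≤ (1 - α ^ 2) * (1 - t ^ 2) := by
      nlinarith [mul_le_mul_of_nonneg_right hpk (sq_nonneg (1 - α * t)), hC]
    exact le_of_mul_le_mul_right h8 h7
  clear hC hpk
  have h2a : 0 < α - t * (1 + q) := by linarith
  have h2b : 0 < α - t * (1 - q) := by nlinarith [mul_nonneg ht0 hq0]
  have hq2' : t ^ 2 * q ^ 2 = t ^ 2 * (1 - α ^ 2) := by rw [hq2]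
  have h2 : 0 < α + α * t ^ 2 - 2 * t := by nlinarith [mul_pos h2a h2b, hq2']
  have h10 : (α - t) * (1 - α * t) ≤ x * (1 - α * t) ^ 2 := by nlinarith [hB, hαt1]
  have h11 : t * D * (1 - α * t) ^ 2 ≤ t * (1 - α ^ 2) := by
    nlinarith [mul_le_mul_of_nonneg_left hD2 ht0]
  nlinarith [h10, h11, h2, sq_nonneg (1 - α * t), hαt1]

theorem stmt_10 (F : ℂ → ℂ) (hF : DifferentiableOn ℂ F (ball 0 1))
    (hmaps : MapsTo F (ball (0 : ℂ) 1) (ball (0 : ℂ) 1))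
    (α : ℝ) (hα0 : 0 < α) (hα1 : α ≤ 1)
    (h0 : F 0 = 0) (hd : deriv F 0 = (α : ℂ)) :
    InjOn F (ball 0 (α / (1 + Real.sqrt (1 - α ^ 2)))) := by
  have hmaps' : MapsTo F (ball (0 : ℂ) 1) (ball (F 0) 1) := by rwa [h0]
  rcases eq_or_lt_of_le hα1 with heq | hα1'
  · -- case α = 1 : F is the identity on the unit ball
    subst heq
    have hrad : (1:ℝ) / (1 + Real.sqrt (1 - 1 ^ 2)) = 1 := by norm_num
    have hone : ‖dslope F 0 0‖ = 1 / 1 := by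
      rw [dslope_same, hd]
      norm_num
    have haff := Complex.affine_of_mapsTo_ball_of_exists_norm_dslope_eq_div hF (hmaps'.mono_right ball_subset_closedBall)
      (mem_ball_self one_pos) hone
    intro p hp p' hp' hpq
    rw [hrad] at hp hp'
    have e1 := haff hp
    have e2 := haff hp'
    simp only [h0, dslope_same, hd, sub_zero, zero_add, Complex.ofReal_one,
      smul_eq_mul, mul_one] at e1 e2
    rw [e1, e2] at hpq
    exact hpq
  -- main case α < 1
  have h1α : (0:ℝ) ≤ 1 - α ^ 2 := by nlinarith
  set q := Real.sqrt (1 - α ^ 2) with hqdef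
  have hq2 : q ^ 2 = 1 - α ^ 2 := Real.sq_sqrt h1α
  have hq0 : 0 ≤ q := Real.sqrt_nonneg _
  have hq1 : (0:ℝ) < 1 + q := by linarith
  set r₀ := α / (1 + q) with hr₀def
  have hr₀pos : 0 < r₀ := div_pos hα0 hq1
  have hr₀α : r₀ ≤ α := div_le_self hα0.le (by linarith)
  have hr₀1 : r₀ ≤ 1 := hr₀α.trans hα1
  have hsub : ball (0:ℂ) r₀ ⊆ ball 0 1 := ball_subset_ball hr₀1
  set g := dslope F 0 with hgdef
  have hgd : DifferentiableOn ℂ g (ball 0 1) :=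
    (Complex.differentiableOn_dslope (isOpen_ball.mem_nhds (mem_ball_self one_pos))).mpr hF
  have hg0 : g 0 = (α : ℂ) := by rw [hgdef, dslope_same, hd]
  have hFeq : F = fun z => z * g z := by
    funext z
    rcases eq_or_ne z 0 with rfl | hz
    · simp [h0]
    · rw [hgdef, dslope_of_ne _ hz, slope_def_field, h0]
      field_simp
      ring
  have hglt : ∀ z ∈ ball (0:ℂ) 1, ‖g z‖ < 1 := by
    intro z hz
    have hle : ‖g z‖ ≤ 1 := by
      simpa using Complex.norm_dslope_le_div_of_mapsTo_ball hF (hmaps'.mono_right ball_subset_closedBall) hz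
    rcases lt_or_eq_of_le hle with h | h
    · exact h
    exfalso
    have haff := Complex.affine_of_mapsTo_ball_of_exists_norm_dslope_eq_div hF (hmaps'.mono_right ball_subset_closedBall) hz
      (by rw [← hgdef, h]; norm_num)
    have hde : deriv F 0 = dslope F 0 z := by
      have hev : F =ᶠ[nhds (0:ℂ)] (fun w => F 0 + (w - 0) • dslope F 0 z) :=
        haff.eventuallyEq_of_mem (isOpen_ball.mem_nhds (mem_ball_self one_pos))
      rw [hev.deriv_eq]
      have hda : HasDerivAt (fun w : ℂ => F 0 + (w - 0) • dslope F 0 z)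
          ((1:ℂ) • dslope F 0 z) 0 :=
        (((hasDerivAt_id 0).sub_const 0).smul_const (dslope F 0 z)).const_add (F 0)
      simpa using hda.deriv
    rw [hd] at hde
    rw [hgdef, ← hde, Complex.norm_real, Real.norm_eq_abs, abs_of_pos hα0] at h
    linarith
  have hgm : MapsTo g (ball 0 1) (ball 0 1) := fun z hz =>
    mem_ball_zero_iff.mpr (hglt z hz)
  have hαC : ‖((α : ℝ) : ℂ)‖ < 1 := by
    rw [Complex.norm_real, Real.norm_eq_abs, abs_of_pos hα0]; exact hα1'
  have hconj : conj' ((α : ℝ) : ℂ) = ((α : ℝ) : ℂ) := Complex.conj_ofReal α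
  set ψ : ℂ → ℂ := fun z => mob ((α : ℝ) : ℂ) (g z) with hψdef
  have hψd : DifferentiableOn ℂ ψ (ball 0 1) := by
    intro z hz
    have h1 := hgd z hz
    have h2 := (mob_hasDerivAt ((α : ℝ) : ℂ)
      (mob_den_ne hαC (hglt z hz))).differentiableAt
    exact h2.comp_differentiableWithinAt z h1
  have hψm : MapsTo ψ (ball 0 1) (ball 0 1) := fun z hz =>
    mem_ball_zero_iff.mpr (mob_mem hαC (hglt z hz))
  have hψ0 : ψ 0 = 0 := by simp [hψdef, mob, hg0]
  have hψle : ∀ z ∈ ball (0:ℂ) 1, ‖ψ z‖ ≤ ‖z‖ := by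
    intro z hz
    have := Complex.dist_le_div_mul_dist_of_mapsTo_ball hψd (by rw [hψ0]; exact hψm.mono_right ball_subset_closedBall) hz
    simpa [hψ0, dist_zero_right] using this
  have hcon : ∀ z ∈ ball (0:ℂ) 1,
      ‖g z - ((α : ℝ) : ℂ)‖ ≤ ‖z‖ * ‖1 - ((α : ℝ) : ℂ) * g z‖ := by
    intro z hz
    have h1 := hψle z hz
    have hden : (1 : ℂ) - conj' ((α : ℝ) : ℂ) * g z ≠ 0 := mob_den_ne hαC (hglt z hz)
    rw [hψdef] at h1
    simp only [mob, hconj] at h1 hden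
    rw [norm_div, div_le_iff₀ (norm_pos_iff.mpr hden)] at h1
    exact h1
  -- positivity of Re (deriv F) on the small ball
  have HRe : ∀ z ∈ ball (0:ℂ) r₀, 0 < (deriv F z).re := by
    intro z hz
    have hz1 : z ∈ ball (0:ℂ) 1 := hsub hz
    have ht0 : 0 ≤ ‖z‖ := norm_nonneg z
    have htr : ‖z‖ < r₀ := mem_ball_zero_iff.mp hz
    have htq : ‖z‖ * (1 + q) < α := by
      rw [hr₀def] at htr
      exact (lt_div_iff₀ hq1).mp htr
    have ht1 : ‖z‖ < 1 := lt_of_lt_of_le htr hr₀1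
    have e1 : ‖g z - ((α : ℝ) : ℂ)‖ ^ 2 = ((g z).re - α) ^ 2 + (g z).im ^ 2 := by
      rw [Complex.sq_norm, Complex.normSq_apply, Complex.sub_re,
        Complex.sub_im, Complex.ofReal_re, Complex.ofReal_im]
      ring
    have e2 : ‖1 - ((α : ℝ) : ℂ) * g z‖ ^ 2
        = (1 - α * (g z).re) ^ 2 + (α * (g z).im) ^ 2 := by
      rw [Complex.sq_norm, Complex.normSq_apply, Complex.sub_re,
        Complex.sub_im, Complex.mul_re, Complex.mul_im, Complex.ofReal_re, Complex.ofReal_im,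
        Complex.one_re, Complex.one_im]
      ring
    have hcon2 : ((g z).re - α) ^ 2 + (g z).im ^ 2
        ≤ ‖z‖ ^ 2 * ((1 - α * (g z).re) ^ 2 + (α * (g z).im) ^ 2) := by
      have h1 := hcon z hz1
      have h2 : ‖g z - ((α : ℝ) : ℂ)‖ ^ 2 ≤ (‖z‖ * ‖1 - ((α : ℝ) : ℂ) * g z‖) ^ 2 :=
        pow_le_pow_left₀ (norm_nonneg _) h1 2
      rw [mul_pow, e1, e2] at h2
      exact h2
    have hpk : ‖deriv g z‖ * (1 - ‖z‖ ^ 2) ≤ 1 - ((g z).re ^ 2 + (g z).im ^ 2) := by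
      have h3 := schwarz_pick hgd hgm hz1
      have hu2 : ‖g z‖ ^ 2 = (g z).re ^ 2 + (g z).im ^ 2 := by
        rw [Complex.sq_norm, Complex.normSq_apply]; ring
      rw [hu2] at h3
      exact h3
    have hcore := landau_core hα0 hα1' ht0 ht1 hq2 hq0 htq hcon2 (norm_nonneg _) hpk
    have hdF : deriv F z = g z + z * deriv g z := by
      have hgz : DifferentiableAt ℂ g z := hgd.differentiableAt (isOpen_ball.mem_nhds hz1)
      have h9 : HasDerivAt (fun w : ℂ => w * g w) (1 * g z + z * deriv g z) z :=
        (hasDerivAt_id z).mul hgz.hasDerivAt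
      rw [hFeq, h9.deriv]
      ring
    have hlow : -(‖z‖ * ‖deriv g z‖) ≤ (z * deriv g z).re := by
      have h10 : |(z * deriv g z).re| ≤ ‖z * deriv g z‖ := by
        exact Complex.abs_re_le_norm _
      rw [norm_mul] at h10
      linarith [neg_abs_le ((z * deriv g z).re)]
    rw [hdF, Complex.add_re]
    linarith
  -- injectivity via the fundamental theorem of calculus
  intro a ha b hb hab
  by_contra hne
  set ℓ : ℝ → ℂ := fun s => b + s • (a - b) with hℓdef
  have hmem : ∀ s ∈ Icc (0:ℝ) 1, ℓ s ∈ ball (0:ℂ) r₀ := by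
    intro s hs
    have hseg : ℓ s ∈ segment ℝ b a := by
      rw [segment_eq_image']
      exact ⟨s, hs, rfl⟩
    exact (convex_ball (0:ℂ) r₀).segment_subset hb ha hseg
  have hcont : ContinuousOn (fun s : ℝ => deriv F (ℓ s)) (Icc (0:ℝ) 1) := by
    have h1 : ContinuousOn (deriv F) (ball (0:ℂ) 1) :=
      ((hF.analyticOnNhd isOpen_ball).deriv).continuousOn
    have h2 : Continuous ℓ := by
      rw [hℓdef]
      exact continuous_const.add (continuous_id.smul continuous_const)
    exact h1.comp h2.continuousOn (fun s hs => hsub (hmem s hs))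
  have hder : ∀ s ∈ uIcc (0:ℝ) 1,
      HasDerivAt (fun s => F (ℓ s)) ((a - b) * deriv F (ℓ s)) s := by
    intro s hs
    rw [uIcc_of_le zero_le_one] at hs
    have hzb : ℓ s ∈ ball (0:ℂ) 1 := hsub (hmem s hs)
    have hF' : HasDerivAt F (deriv F (ℓ s)) (ℓ s) :=
      (hF.differentiableAt (isOpen_ball.mem_nhds hzb)).hasDerivAt
    have hℓ' : HasDerivAt ℓ (a - b) s := by
      have := ((hasDerivAt_id s).smul_const (a - b)).const_add b
      rw [one_smul] at this
      exact this
    have h3 := (hF'.hasFDerivAt.restrictScalars ℝ).comp_hasDerivAt s hℓ'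
    simp only [ContinuousLinearMap.coe_restrictScalars', ContinuousLinearMap.smulRight_apply,
      ContinuousLinearMap.one_apply, smul_eq_mul, mul_comm] at h3
    exact h3
  have hint : IntervalIntegrable (fun s => (a - b) * deriv F (ℓ s))
      MeasureTheory.volume 0 1 := by
    apply ContinuousOn.intervalIntegrable
    rw [uIcc_of_le zero_le_one]
    exact continuousOn_const.mul hcont
  have hint2 : IntervalIntegrable (fun s => deriv F (ℓ s)) MeasureTheory.volume 0 1 := by
    apply ContinuousOn.intervalIntegrable
    rw [uIcc_of_le zero_le_one]
    exact hcont
  have hFTC := intervalIntegral.integral_eq_sub_of_hasDerivAt hder hint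
  have hℓ1 : ℓ 1 = a := by rw [hℓdef]; simp
  have hℓ0 : ℓ 0 = b := by rw [hℓdef]; simp
  rw [hℓ1, hℓ0, hab, sub_self, intervalIntegral.integral_const_mul] at hFTC
  have hI : ∫ s in (0:ℝ)..1, deriv F (ℓ s) = 0 := by
    rcases mul_eq_zero.mp hFTC with h | h
    · exact absurd (sub_eq_zero.mp h) hne
    · exact h
  have hIre : ∫ s in (0:ℝ)..1, (deriv F (ℓ s)).re = 0 := by
    have h4 := Complex.reCLM.intervalIntegral_comp_comm hint2
    simp only [Complex.reCLM_apply] at h4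
    rw [h4, hI]
    simp
  have hint3 : IntervalIntegrable (fun s => (deriv F (ℓ s)).re) MeasureTheory.volume 0 1 := by
    apply ContinuousOn.intervalIntegrable
    rw [uIcc_of_le zero_le_one]
    exact Complex.continuous_re.comp_continuousOn hcont
  have hpos : 0 < ∫ s in (0:ℝ)..1, (deriv F (ℓ s)).re :=
    intervalIntegral.intervalIntegral_pos_of_pos_on hint3
      (fun s hs => HRe _ (hmem s (Ioo_subset_Icc_self hs))) one_pos
  rw [hIre] at hpos
  exact lt_irrefl 0 hpos
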